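/- For r, u ∈ ℝ² with u ≠ 0 and ⟨r,u⟩ < 0, and combined radius R with ‖r‖ > R: a collision time t ≥ 0 with ‖r + t·u‖ ≤ R exists if and only if the predicted minimum distance dmin = √(‖r‖² - ⟨r,u⟩²/‖u‖²) satisfies dmin ≤ R. -/
import Mathlib


open scoped RealInnerProductSpace

/-- For approaching agents (⟨r,u⟩ < 0, u ≠ 0, ‖r‖ > R): a collision time t ≥ 0 with
‖r + t·u‖ ≤ R exists iff the predicted minimum distance
dmin = √(‖r‖² - ⟨r,u⟩²/‖u‖²) satisfies dmin ≤ R. -/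
theorem collision_iff_dmin_le
    (r u : EuclideanSpace ℝ (Fin 2)) (R : ℝ) (hR : 0 < R)
    (hu : u ≠ 0) (hru : ⟪r, u⟫ < 0) (hfar : R < ‖r‖) :
    (∃ t : ℝ, 0 ≤ t ∧ ‖r + t • u‖ ≤ R) ↔
      Real.sqrt (‖r‖ ^ 2 - ⟪r, u⟫ ^ 2 / ‖u‖ ^ 2) ≤ R := by
  set a := ⟪r, u⟫ with ha
  have hun : (0:ℝ) < ‖u‖ := norm_pos_iff.mpr hu
  have hun2 : (0:ℝ) < ‖u‖ ^ 2 := by positivity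
  have key : ∀ t : ℝ, ‖r + t • u‖ ^ 2 = ‖r‖ ^ 2 + 2 * t * a + t ^ 2 * ‖u‖ ^ 2 := by
    intro t
    rw [norm_add_sq_real, real_inner_smul_right, norm_smul, Real.norm_eq_abs, mul_pow, sq_abs]
    ring
  have hmin : ∀ t : ℝ, ‖r‖ ^ 2 - a ^ 2 / ‖u‖ ^ 2 ≤ ‖r + t • u‖ ^ 2 := by
    intro t
    rw [key t]
    have hdiv : a ^ 2 / ‖u‖ ^ 2 * ‖u‖ ^ 2 = a ^ 2 := div_mul_cancel₀ _ (ne_of_gt hun2)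
    nlinarith [sq_nonneg (t * ‖u‖ ^ 2 + a), hdiv, hun2]
  have hts : ‖r + (-a / ‖u‖ ^ 2) • u‖ ^ 2 = ‖r‖ ^ 2 - a ^ 2 / ‖u‖ ^ 2 := by
    rw [key]
    field_simp
    ring
  constructor
  · rintro ⟨t, ht, hle⟩
    have h1 : ‖r‖ ^ 2 - a ^ 2 / ‖u‖ ^ 2 ≤ R ^ 2 := by
      have h2 : ‖r + t • u‖ ^ 2 ≤ R ^ 2 := by nlinarith [norm_nonneg (r + t • u)]
      exact le_trans (hmin t) h2
    calc Real.sqrt (‖r‖ ^ 2 - a ^ 2 / ‖u‖ ^ 2) ≤ Real.sqrt (R ^ 2) :=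
          Real.sqrt_le_sqrt h1
      _ = R := by rw [Real.sqrt_sq hR.le]
  · intro h
    refine ⟨-a / ‖u‖ ^ 2, div_nonneg (by linarith) hun2.le, ?_⟩
    have : ‖r + (-a / ‖u‖ ^ 2) • u‖ = Real.sqrt (‖r‖ ^ 2 - a ^ 2 / ‖u‖ ^ 2) := by
      rw [← hts, Real.sqrt_sq (norm_nonneg _)]
    rw [this]
    exact h
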